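/- A unital Jordan homomorphism between matrix algebras that is bijective is either an algebra isomorphism or an algebra anti-isomorphism: every linear bijection J : M_n(ℂ) → M_n(ℂ) with J(1) = 1 and J(xy + yx) = J(x)J(y) + J(y)J(x) for all x, y satisfies either J(xy) = J(x)J(y) for all x, y, or J(xy) = J(y)J(x) for all x, y. -/

import Mathlib

open Matrix

private lemma half_cancel {n : ℕ} {a b : Matrix (Fin n) (Fin n) ℂ}
    (h : a + a = b + b) : a = b := by
  have h2 : (2:ℂ) • a = (2:ℂ) • b := by rw [two_smul, two_smul]; exact h
  exact smul_right_injective _ (two_ne_zero (α := ℂ)) h2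

private lemma exists_entry_ne {n : ℕ} {M : Matrix (Fin n) (Fin n) ℂ} (h : M ≠ 0) :
    ∃ i j, M i j ≠ 0 := by
  by_contra h'
  push_neg at h'
  exact h (by ext i j; simpa using h' i j)

/-- `M_n(ℂ)` is a prime ring. -/
private lemma matrix_prime {n : ℕ} {B C : Matrix (Fin n) (Fin n) ℂ}
    (h : ∀ t, B * t * C = 0) : B = 0 ∨ C = 0 := by
  by_contra hc
  push_neg at hc
  obtain ⟨hB, hC⟩ := hc
  obtain ⟨i, j, hij⟩ := exists_entry_ne hB
  obtain ⟨k, l, hkl⟩ := exists_entry_ne hC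
  have h2 := congrFun (congrFun (h (single j k 1)) i) l
  rw [Matrix.mul_assoc] at h2
  have e : (single j k (1:ℂ) * C) = Matrix.of fun a b => if a = j then C k b else 0 := by
    ext a b
    by_cases ha : a = j
    · subst ha; simp
    · simp [Matrix.single_mul_apply_of_ne (h := ha), ha]
  rw [e] at h2
  simp only [Matrix.mul_apply, Matrix.of_apply, Matrix.zero_apply, mul_ite, mul_zero] at h2
  rw [Finset.sum_ite_eq' Finset.univ j (fun m => B i m * C k l)] at h2
  simp at h2
  rcases h2 with h' | h'
  · exact hij h'
  · exact hkl h'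

/-- A nonzero quadratic has finitely many roots. -/
private lemma quad_roots_finite (a b c : ℂ) (h : a ≠ 0 ∨ c ≠ 0) :
    {t : ℂ | a + b * t + c * t ^ 2 = 0}.Finite := by
  set p : Polynomial ℂ := Polynomial.C a + Polynomial.C b * Polynomial.X
      + Polynomial.C c * Polynomial.X ^ 2 with hp
  have hpne : p ≠ 0 := by
    intro h0
    rcases h with ha | hc
    · have := congrArg (Polynomial.coeff · 0) h0
      simp [hp] at this
      exact ha this
    · have := congrArg (Polynomial.coeff · 2) h0
      simp [hp, Polynomial.coeff_C, Polynomial.coeff_X, Polynomial.coeff_X_pow,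
        Polynomial.coeff_C_mul] at this
      exact hc this
  refine (Polynomial.finite_setOf_isRoot hpne).subset ?_
  intro t ht
  simp only [Set.mem_setOf_eq] at ht ⊢
  simp only [Polynomial.IsRoot, hp, Polynomial.eval_add, Polynomial.eval_mul,
    Polynomial.eval_C, Polynomial.eval_X, Polynomial.eval_pow]
  exact ht

/-- Key prime-ring computation: from `a t b + b t a = 0` for all `t`,
deduce `b t (a s a) = 0`. -/
private lemma btasa {n : ℕ} {a b : Matrix (Fin n) (Fin n) ℂ}
    (h : ∀ t, a * t * b + b * t * a = 0) (t s : Matrix (Fin n) (Fin n) ℂ) :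
    b * t * (a * s * a) = 0 := by
  have hab : ∀ r, a * r * b = -(b * r * a) := fun r => eq_neg_of_add_eq_zero_left (h r)
  have key := h (t * a * s)
  have c1 : a * (t * a * s) * b = b * t * a * s * a := by
    calc a * (t * a * s) * b = a * t * (a * s * b) := by noncomm_ring
      _ = a * t * (-(b * s * a)) := by rw [hab s]
      _ = -(a * t * b * (s * a)) := by noncomm_ring
      _ = -(-(b * t * a) * (s * a)) := by rw [hab t]
      _ = b * t * a * s * a := by noncomm_ring
  have c2 : b * (t * a * s) * a = b * t * a * s * a := by noncomm_ring
  rw [c1, c2] at key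
  have h0 : b * t * a * s * a = 0 := half_cancel (by rw [key, add_zero])
  calc b * t * (a * s * a) = b * t * a * s * a := by noncomm_ring
    _ = 0 := h0

/-- A unital bijective Jordan homomorphism of `M_n(ℂ)` is multiplicative or
antimultiplicative. -/
theorem jordan_bijection_mul_or_antimul
    {n : ℕ} (J : Matrix (Fin n) (Fin n) ℂ →ₗ[ℂ] Matrix (Fin n) (Fin n) ℂ)
    (hbij : Function.Bijective J)
    (hunital : J 1 = 1)
    (hjordan : ∀ x y : Matrix (Fin n) (Fin n) ℂ,
      J (x * y + y * x) = J x * J y + J y * J x) :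
    (∀ x y : Matrix (Fin n) (Fin n) ℂ, J (x * y) = J x * J y) ∨
    (∀ x y : Matrix (Fin n) (Fin n) ℂ, J (x * y) = J y * J x) := by
  -- Step 1: J preserves squares
  have L1 : ∀ x, J (x * x) = J x * J x := by
    intro x
    apply half_cancel
    have h := hjordan x x
    rw [map_add] at h
    exact h
  -- Step 2: J preserves xyx
  have L2 : ∀ x y, J (x * y * x) = J x * J y * J x := by
    intro x y
    have h1 := hjordan x (x * y + y * x)
    have h2 := hjordan (x * x) y
    have e1 : x * (x * y + y * x) + (x * y + y * x) * x
        = ((x * x) * y + y * (x * x)) + (x * y * x + x * y * x) := by noncomm_ring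
    rw [e1, map_add J ((x * x) * y + y * (x * x)) (x * y * x + x * y * x),
      map_add J (x * y * x) (x * y * x), h2, L1 x] at h1
    apply half_cancel
    have e2 : J x * J (x * y + y * x) + J (x * y + y * x) * J x
        = J x * (J x * J y + J y * J x) + (J x * J y + J y * J x) * J x := by
      rw [hjordan x y]
    rw [e2] at h1
    have e3 : J x * (J x * J y + J y * J x) + (J x * J y + J y * J x) * J x
        = (J x * J x * J y + J y * (J x * J x)) + (J x * J y * J x + J x * J y * J x) := by
      noncomm_ring
    rw [e3] at h1
    exact add_left_cancel h1
  -- Step 3: linearized triple product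
  have L3 : ∀ x y z, J (x * z * y + y * z * x) = J x * J z * J y + J y * J z * J x := by
    intro x y z
    have key := L2 (x + y) z
    have e : (x + y) * z * (x + y) = x * z * x + (x * z * y + y * z * x) + y * z * y := by
      noncomm_ring
    rw [e, map_add J (x * z * x + (x * z * y + y * z * x)) (y * z * y),
      map_add J (x * z * x) (x * z * y + y * z * x), L2 x z, L2 y z] at key
    have e2 : J (x + y) * J z * J (x + y)
        = J x * J z * J x + (J x * J z * J y + J y * J z * J x) + J y * J z * J y := by
      rw [map_add]; noncomm_ring
    rw [e2] at key
    exact add_left_cancel (add_right_cancel key)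
  -- Step 4: (J(xy) - JxJy) t (J(xy) - JyJx) + (J(xy) - JyJx) t (J(xy) - JxJy) = 0
  have L4 : ∀ x y t, (J (x * y) - J x * J y) * t * (J (x * y) - J y * J x)
      + (J (x * y) - J y * J x) * t * (J (x * y) - J x * J y) = 0 := by
    intro x y t
    obtain ⟨s, rfl⟩ := hbij.surjective t
    have h1 := L3 (x * y) (y * x) s
    have e1 : x * y * s * (y * x) + y * x * s * (x * y)
        = x * (y * s * y) * x + y * (x * s * x) * y := by noncomm_ring
    rw [e1, map_add J (x * (y * s * y) * x) (y * (x * s * x) * y),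
      L2 x (y * s * y), L2 y (x * s * x), L2 y s, L2 x s] at h1
    have hQ : J (y * x) = J x * J y + J y * J x - J (x * y) := by
      have h := hjordan x y
      rw [map_add] at h
      rw [eq_sub_iff_add_eq, add_comm]
      exact h
    rw [hQ] at h1
    have e4 : (J (x * y) - J x * J y) * J s * (J (x * y) - J y * J x)
        + (J (x * y) - J y * J x) * J s * (J (x * y) - J x * J y)
        = (J x * (J y * J s * J y) * J x + J y * (J x * J s * J x) * J y)
          - (J (x * y) * J s * (J x * J y + J y * J x - J (x * y))
            + (J x * J y + J y * J x - J (x * y)) * J s * J (x * y)) := by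
      noncomm_ring
    rw [e4, h1, sub_self]
  -- Step 5: pointwise dichotomy
  have dich : ∀ x y, J (x * y) - J x * J y = 0 ∨ J (x * y) - J y * J x = 0 := by
    intro x y
    by_cases hb : J (x * y) - J y * J x = 0
    · exact Or.inr hb
    · left
      have hA : ∀ s, (J (x * y) - J x * J y) * s * (J (x * y) - J x * J y) = 0 := by
        intro s
        have h5 : ∀ t, (J (x * y) - J y * J x) * t
            * ((J (x * y) - J x * J y) * s * (J (x * y) - J x * J y)) = 0 :=
          fun t => btasa (L4 x y) t s
        exact (matrix_prime h5).resolve_left hb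
      exact (matrix_prime hA).elim id id
  -- Step 6: globalize
  by_cases hglob : ∀ x y, J (x * y) - J x * J y = 0
  · left
    intro x y
    have := hglob x y
    rwa [sub_eq_zero] at this
  · right
    push_neg at hglob
    obtain ⟨p, q, hpq⟩ := hglob
    intro x y
    by_contra hne
    have hB0 : J (x * y) - J y * J x ≠ 0 := sub_ne_zero.mpr hne
    obtain ⟨i, j, hij⟩ := exists_entry_ne hpq
    obtain ⟨k, l, hkl⟩ := exists_entry_ne hB0
    -- expansion of the multiplicative defect along the line (p + t•x, q + t•y)
    have eprod : ∀ t : ℂ, (p + t • x) * (q + t • y)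
        = p * q + t • (p * y + x * q) + t ^ 2 • (x * y) := by
      intro t
      simp only [mul_add, add_mul, smul_mul_assoc, mul_smul_comm, smul_smul, smul_add]
      module
    have expandA : ∀ t : ℂ, J ((p + t • x) * (q + t • y)) - J (p + t • x) * J (q + t • y)
        = (J (p * q) - J p * J q)
          + t • ((J (p * y) - J p * J y) + (J (x * q) - J x * J q))
          + t ^ 2 • (J (x * y) - J x * J y) := by
      intro t
      rw [eprod t]
      simp only [map_add, LinearMap.map_smul]
      simp only [mul_add, add_mul, smul_mul_assoc, mul_smul_comm, smul_smul, smul_add,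
        smul_sub]
      module
    have expandB : ∀ t : ℂ, J ((p + t • x) * (q + t • y)) - J (q + t • y) * J (p + t • x)
        = (J (p * q) - J q * J p)
          + t • ((J (p * y) - J y * J p) + (J (x * q) - J q * J x))
          + t ^ 2 • (J (x * y) - J y * J x) := by
      intro t
      rw [eprod t]
      simp only [map_add, LinearMap.map_smul]
      simp only [mul_add, add_mul, smul_mul_assoc, mul_smul_comm, smul_smul, smul_add,
        smul_sub]
      module
    -- finitely many bad parameters
    have hSA := quad_roots_finite ((J (p * q) - J p * J q) i j)
      (((J (p * y) - J p * J y) + (J (x * q) - J x * J q)) i j)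
      ((J (x * y) - J x * J y) i j) (Or.inl hij)
    have hSB := quad_roots_finite ((J (p * q) - J q * J p) k l)
      (((J (p * y) - J y * J p) + (J (x * q) - J q * J x)) k l)
      ((J (x * y) - J y * J x) k l) (Or.inr hkl)
    obtain ⟨t, ht⟩ := ((hSA.union hSB).infinite_compl).nonempty
    rw [Set.mem_compl_iff, Set.mem_union] at ht
    push_neg at ht
    obtain ⟨htA, htB⟩ := ht
    rw [Set.mem_setOf_eq] at htA htB
    rcases dich (p + t • x) (q + t • y) with h | h
    · apply htA
      rw [expandA t] at h
      have h0 := Matrix.ext_iff.mpr h i j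
      simp only [Matrix.add_apply, Matrix.sub_apply, Matrix.smul_apply, Matrix.zero_apply,
        smul_eq_mul] at h0 ⊢
      linear_combination h0
    · apply htB
      rw [expandB t] at h
      have h0 := Matrix.ext_iff.mpr h k l
      simp only [Matrix.add_apply, Matrix.sub_apply, Matrix.smul_apply, Matrix.zero_apply,
        smul_eq_mul] at h0 ⊢
      linear_combination h0
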